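/- arXiv:2304.02743 — 3 statements merged into one kernel-verified Lean document; each statement's English description precedes it below -/
import Mathlib

section
/- If ρ and ρ' are polymatroids on the same ground set E with M_ρ^k = M_{ρ'}^k (using the same sets X_e for each e ∈ E), then ρ = ρ'. -/
/-- A polymatroid rank function on ground set `E`: normalized, monotone, and submodular. -/
structure IsPolymatroid {α : Type*} [DecidableEq α] (E : Finset α) (ρ : Finset α → ℕ) : Prop where
  normalized : ρ ∅ = 0
  monotone : ∀ A B : Finset α, A ⊆ B → B ⊆ E → ρ A ≤ ρ B
  submodular : ∀ A B : Finset α, A ⊆ E → B ⊆ E → ρ (A ∪ B) + ρ (A ∩ B) ≤ ρ A + ρ B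

/-- The rank function of the `k`-natural matroid `M_ρ^k` on `X_E = ⋃ e ∈ E, X e`:
`r(Y) = min { ρ(A) + |Y \ X_A| : A ⊆ E }`. -/
def natRank {α β : Type*} [DecidableEq α] [DecidableEq β] (E : Finset α) (ρ : Finset α → ℕ)
    (X : α → Finset β) (Y : Finset β) : ℕ :=
  (E.powerset.image fun A => ρ A + (Y \ A.biUnion X).card).min'
    ((E.powerset_nonempty).image _)

lemma poly_union_le {α : Type*} [DecidableEq α] {E : Finset α} {ρ : Finset α → ℕ} {k : ℕ}
    (h : IsPolymatroid E ρ) (hk : ∀ e ∈ E, ρ {e} ≤ k) :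
    ∀ S : Finset α, S ⊆ E → ∀ B ⊆ E, ρ (S ∪ B) ≤ ρ B + k * (S \ B).card := by
  intro S
  induction S using Finset.induction_on with
  | empty => intro _ B hB; simp
  | @insert a S ha ih =>
    intro hSE B hB
    have haE : a ∈ E := hSE (Finset.mem_insert_self a S)
    have hSE' : S ⊆ E := fun x hx => hSE (Finset.mem_insert_of_mem hx)
    by_cases hab : a ∈ B
    · have : insert a S ∪ B = S ∪ B := by
        rw [Finset.insert_union, Finset.insert_eq_self.2 (Finset.mem_union_right S hab)]
      rw [this]
      calc ρ (S ∪ B) ≤ ρ B + k * (S \ B).card := ih hSE' B hB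
        _ ≤ ρ B + k * (insert a S \ B).card := by
            gcongr; exact Finset.subset_insert a S
    · have hsub : ρ (insert a S ∪ B) ≤ ρ {a} + ρ (S ∪ B) := by
        have := h.submodular {a} (S ∪ B) (by simpa using haE)
          (Finset.union_subset hSE' hB)
        have h2 : {a} ∪ (S ∪ B) = insert a S ∪ B := by
          rw [← Finset.insert_eq, Finset.insert_union]
        rw [h2] at this
        omega
      have hcard : (insert a S \ B).card = (S \ B).card + 1 := by
        have : insert a S \ B = insert a (S \ B) := by
          rw [Finset.insert_sdiff_of_notMem _ hab]
        rw [this, Finset.card_insert_of_notMem (by simp [ha])]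
      calc ρ (insert a S ∪ B) ≤ ρ {a} + ρ (S ∪ B) := hsub
        _ ≤ k + (ρ B + k * (S \ B).card) := by
            have := hk a haE
            have := ih hSE' B hB
            omega
        _ = ρ B + k * (insert a S \ B).card := by rw [hcard]; ring

lemma natRank_biUnion {α β : Type*} [DecidableEq α] [DecidableEq β] {k : ℕ}
    {E : Finset α} {ρ : Finset α → ℕ}
    (h : IsPolymatroid E ρ) (hk : ∀ e ∈ E, ρ {e} ≤ k)
    {X : α → Finset β} (hcard : ∀ e ∈ E, (X e).card = k)
    (hdisjX : ∀ e ∈ E, ∀ f ∈ E, e ≠ f → Disjoint (X e) (X f))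
    {A : Finset α} (hA : A ⊆ E) :
    natRank E ρ X (A.biUnion X) = ρ A := by
  apply le_antisymm
  · apply Finset.min'_le
    refine Finset.mem_image.2 ⟨A, Finset.mem_powerset.2 hA, ?_⟩
    simp
  · apply Finset.le_min'
    intro y hy
    obtain ⟨B, hB, rfl⟩ := Finset.mem_image.1 hy
    rw [Finset.mem_powerset] at hB
    have hsd : A.biUnion X \ B.biUnion X = (A \ B).biUnion X := by
      ext x
      simp only [Finset.mem_sdiff, Finset.mem_biUnion]
      constructor
      · rintro ⟨⟨e, he, hxe⟩, hnb⟩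
        exact ⟨e, ⟨he, fun heB => hnb ⟨e, heB, hxe⟩⟩, hxe⟩
      · rintro ⟨e, he, hxe⟩
        refine ⟨⟨e, he.1, hxe⟩, ?_⟩
        rintro ⟨f, hf, hxf⟩
        rcases eq_or_ne e f with rfl | hne
        · exact he.2 hf
        · exact absurd hxf (Finset.disjoint_left.1 (hdisjX e (hA he.1) f (hB hf) hne) hxe)
    rw [hsd]
    have hcard2 : ((A \ B).biUnion X).card = k * (A \ B).card := by
      rw [Finset.card_biUnion (fun e he f hf hef =>
        hdisjX e (hA (Finset.mem_sdiff.1 he).1) f (hA (Finset.mem_sdiff.1 hf).1) hef)]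
      rw [Finset.sum_congr rfl (fun e he => hcard e (hA (Finset.mem_sdiff.1 he).1))]
      simp [mul_comm]
    rw [hcard2]
    calc ρ A ≤ ρ (A ∪ B) :=
        h.monotone A (A ∪ B) Finset.subset_union_left (Finset.union_subset hA hB)
      _ ≤ ρ B + k * (A \ B).card := poly_union_le h hk A hA B hB

/-- If two `k`-polymatroids on `E` have the same `k`-natural matroid (with the same sets
`X_e`), then they are equal. -/
theorem eq_of_natRank_eq {α β : Type*} [DecidableEq α] [DecidableEq β] (k : ℕ)
    (E : Finset α) (ρ ρ' : Finset α → ℕ)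
    (h : IsPolymatroid E ρ) (h' : IsPolymatroid E ρ')
    (hk : ∀ e ∈ E, ρ {e} ≤ k) (hk' : ∀ e ∈ E, ρ' {e} ≤ k)
    (X : α → Finset β) (hcard : ∀ e ∈ E, (X e).card = k)
    (hdisjX : ∀ e ∈ E, ∀ f ∈ E, e ≠ f → Disjoint (X e) (X f))
    (heq : ∀ Y ⊆ E.biUnion X, natRank E ρ X Y = natRank E ρ' X Y) :
    ∀ A ⊆ E, ρ A = ρ' A := by
  intro A hA
  have hsub : A.biUnion X ⊆ E.biUnion X := Finset.biUnion_subset_biUnion_of_subset_left X hA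
  rw [← natRank_biUnion h hk hcard hdisjX hA, ← natRank_biUnion h' hk' hcard hdisjX hA]
  exact heq _ hsub
end

section
/- The k-natural matroid of the k-dual of a k-polymatroid is the matroid dual of the k-natural matroid: (M_ρ^k)* = M_{ρ*}^k, where both are matroids on X_E using the same sets X_e. -/
/-- The `k`-dual of a `k`-polymatroid on `E`: `ρ*(Y) = k|Y| + ρ(E \ Y) - ρ(E)`. -/
def kDual {α : Type*} [DecidableEq α] (E : Finset α) (k : ℕ) (ρ : Finset α → ℕ)
    (Y : Finset α) : ℕ :=
  k * Y.card + ρ (E \ Y) - ρ E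

lemma natRank_le {α β : Type*} [DecidableEq α] [DecidableEq β] (E : Finset α)
    (ρ : Finset α → ℕ) (X : α → Finset β) (Y : Finset β) {A : Finset α} (hA : A ⊆ E) :
    natRank E ρ X Y ≤ ρ A + (Y \ A.biUnion X).card := by
  apply Finset.min'_le
  exact Finset.mem_image_of_mem _ (Finset.mem_powerset.2 hA)

lemma natRank_exists {α β : Type*} [DecidableEq α] [DecidableEq β] (E : Finset α)
    (ρ : Finset α → ℕ) (X : α → Finset β) (Y : Finset β) :
    ∃ A ⊆ E, natRank E ρ X Y = ρ A + (Y \ A.biUnion X).card := by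
  have := Finset.min'_mem (E.powerset.image fun A => ρ A + (Y \ A.biUnion X).card)
    ((E.powerset_nonempty).image _)
  rw [Finset.mem_image] at this
  obtain ⟨A, hA, hEq⟩ := this
  exact ⟨A, Finset.mem_powerset.1 hA, hEq.symm⟩

lemma poly_union_bound {α : Type*} [DecidableEq α] {E : Finset α} {ρ : Finset α → ℕ} {k : ℕ}
    (h : IsPolymatroid E ρ) (hk : ∀ e ∈ E, ρ {e} ≤ k) :
    ∀ s ⊆ E, ∀ A ⊆ E, ρ (A ∪ s) ≤ ρ A + k * s.card := by
  intro s
  induction s using Finset.induction_on with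
  | empty => intro _ A hA; simp
  | @insert e s he ih =>
    intro hs A hA
    have heE : e ∈ E := hs (Finset.mem_insert_self e s)
    have hsE : s ⊆ E := fun x hx => hs (Finset.mem_insert_of_mem hx)
    have hAs : A ∪ s ⊆ E := Finset.union_subset hA hsE
    have hsub := h.submodular (A ∪ s) {e} hAs (by simpa using heE)
    have h1 : ρ (A ∪ insert e s) ≤ ρ (A ∪ s) + k := by
      have : ρ ((A ∪ s) ∪ {e}) ≤ ρ (A ∪ s) + ρ {e} := le_trans (Nat.le_add_right _ _) hsub
      calc ρ (A ∪ insert e s) = ρ ((A ∪ s) ∪ {e}) := by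
            congr 1; ext x; simp [Finset.mem_insert]
        _ ≤ ρ (A ∪ s) + ρ {e} := this
        _ ≤ ρ (A ∪ s) + k := by have := hk e heE; omega
    have h2 := ih hsE A hA
    rw [Finset.card_insert_of_notMem he]
    calc ρ (A ∪ insert e s) ≤ ρ (A ∪ s) + k := h1
      _ ≤ ρ A + k * s.card + k := by omega
      _ = ρ A + k * (s.card + 1) := by ring

lemma poly_bound {α : Type*} [DecidableEq α] {E : Finset α} {ρ : Finset α → ℕ} {k : ℕ}
    (h : IsPolymatroid E ρ) (hk : ∀ e ∈ E, ρ {e} ≤ k) {A : Finset α} (hA : A ⊆ E) :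
    ρ E ≤ ρ A + k * (E \ A).card := by
  have := poly_union_bound h hk (E \ A) (Finset.sdiff_subset) A hA
  rwa [Finset.union_sdiff_of_subset hA] at this

lemma biUnion_sdiff {α β : Type*} [DecidableEq α] [DecidableEq β] {E : Finset α}
    (X : α → Finset β)
    (hdisjX : ∀ e ∈ E, ∀ f ∈ E, e ≠ f → Disjoint (X e) (X f))
    {A : Finset α} (hA : A ⊆ E) :
    E.biUnion X \ A.biUnion X = (E \ A).biUnion X := by
  ext x
  simp only [Finset.mem_sdiff, Finset.mem_biUnion]
  constructor
  · rintro ⟨⟨e, heE, hxe⟩, hnx⟩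
    refine ⟨e, ⟨heE, fun heA => hnx ⟨e, heA, hxe⟩⟩, hxe⟩
  · rintro ⟨e, he, hxe⟩
    refine ⟨⟨e, he.1, hxe⟩, ?_⟩
    rintro ⟨f, hfA, hxf⟩
    have hfE : f ∈ E := hA hfA
    have : e ≠ f := fun hef => he.2 (hef ▸ hfA)
    exact absurd ((hdisjX e he.1 f hfE this).le_bot (Finset.mem_inter.2 ⟨hxe, hxf⟩))
      (by simp)

lemma card_biUnion_k {α β : Type*} [DecidableEq α] [DecidableEq β] {E : Finset α} {k : ℕ}
    (X : α → Finset β) (hcard : ∀ e ∈ E, (X e).card = k)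
    (hdisjX : ∀ e ∈ E, ∀ f ∈ E, e ≠ f → Disjoint (X e) (X f))
    {A : Finset α} (hA : A ⊆ E) :
    (A.biUnion X).card = k * A.card := by
  rw [Finset.card_biUnion (fun x hx y hy hxy => hdisjX x (hA hx) y (hA hy) hxy)]
  rw [Finset.sum_congr rfl (fun x hx => hcard x (hA hx)), Finset.sum_const, smul_eq_mul,
    mul_comm]

/-- The `k`-natural matroid of the `k`-dual is the matroid dual of the `k`-natural matroid:
`(M_ρ^k)* = M_{ρ*}^k`, where the dual matroid of `(X_E, r)` has rank
`Y ↦ |Y| + r(X_E \ Y) - r(X_E)`. -/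
theorem natRank_kDual {α β : Type*} [DecidableEq α] [DecidableEq β] (k : ℕ)
    (E : Finset α) (ρ : Finset α → ℕ) (h : IsPolymatroid E ρ)
    (hk : ∀ e ∈ E, ρ {e} ≤ k)
    (X : α → Finset β) (hcard : ∀ e ∈ E, (X e).card = k)
    (hdisjX : ∀ e ∈ E, ∀ f ∈ E, e ≠ f → Disjoint (X e) (X f)) :
    ∀ Y ⊆ E.biUnion X,
      Y.card + natRank E ρ X (E.biUnion X \ Y) - natRank E ρ X (E.biUnion X) =
        natRank E (kDual E k ρ) X Y := by
  intro Y hY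
  -- rank of full ground set is ρ E
  have hfull : natRank E ρ X (E.biUnion X) = ρ E := by
    apply le_antisymm
    · have := natRank_le E ρ X (E.biUnion X) (A := E) (Finset.Subset.refl E)
      simpa using this
    · obtain ⟨A, hA, hEq⟩ := natRank_exists E ρ X (E.biUnion X)
      rw [hEq, biUnion_sdiff X hdisjX hA, card_biUnion_k X hcard hdisjX Finset.sdiff_subset]
      exact poly_bound h hk hA
  -- key per-term identity
  have key : ∀ A ⊆ E,
      Y.card + (ρ A + ((E.biUnion X \ Y) \ A.biUnion X).card) =
      (kDual E k ρ (E \ A) + (Y \ (E \ A).biUnion X).card) + ρ E := by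
    intro A hA
    have hEA : (E \ A) ⊆ E := Finset.sdiff_subset
    have hXsplit : E.biUnion X \ A.biUnion X = (E \ A).biUnion X :=
      biUnion_sdiff X hdisjX hA
    have hcardEA : ((E \ A).biUnion X).card = k * (E \ A).card :=
      card_biUnion_k X hcard hdisjX hEA
    -- (X_E \ Y) \ X_A = X_{E\A} \ Y
    have h1 : (E.biUnion X \ Y) \ A.biUnion X = (E \ A).biUnion X \ Y := by
      rw [sdiff_right_comm, hXsplit]
    -- Y \ X_{E\A} = Y ∩ X_A  (since Y ⊆ X_E)
    have h2 : Y \ (E \ A).biUnion X = Y ∩ A.biUnion X := by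
      rw [← hXsplit]
      ext x
      simp only [Finset.mem_sdiff, Finset.mem_inter]
      constructor
      · rintro ⟨hxY, hx⟩
        have := hY hxY
        refine ⟨hxY, ?_⟩
        by_contra hxA
        exact hx ⟨this, hxA⟩
      · rintro ⟨hxY, hxA⟩
        exact ⟨hxY, fun hx => hx.2 hxA⟩
    -- Y ∩ X_{E\A} = Y \ X_A
    have h3 : Y ∩ (E \ A).biUnion X = Y \ A.biUnion X := by
      rw [← hXsplit]
      ext x
      simp only [Finset.mem_sdiff, Finset.mem_inter]
      constructor
      · rintro ⟨hxY, hxE, hxA⟩; exact ⟨hxY, hxA⟩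
      · rintro ⟨hxY, hxA⟩; exact ⟨hxY, hY hxY, hxA⟩
    -- cardinalities
    have hc1 : ((E \ A).biUnion X \ Y).card + ((E \ A).biUnion X ∩ Y).card
        = ((E \ A).biUnion X).card := Finset.card_sdiff_add_card_inter _ _
    have hc2 : (Y ∩ (E \ A).biUnion X).card + (Y \ (E \ A).biUnion X).card = Y.card := by
      rw [add_comm]; exact Finset.card_sdiff_add_card_inter _ _
    have hEAA : E \ (E \ A) = A := Finset.sdiff_sdiff_eq_self hA
    have hlb : ρ E ≤ ρ A + k * (E \ A).card := poly_bound h hk hA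
    have hkd : kDual E k ρ (E \ A) = k * (E \ A).card + ρ A - ρ E := by
      rw [kDual, hEAA]
    rw [h1, h2, hkd]
    have hic : ((E \ A).biUnion X ∩ Y).card = (Y ∩ (E \ A).biUnion X).card := by
      rw [Finset.inter_comm]
    rw [hic] at hc1
    rw [h2] at hc2
    rw [hcardEA] at hc1
    omega
  apply le_antisymm
  · -- LHS ≤ RHS: pick minimizer A3 for RHS? No: show LHS ≤ each term of RHS
    obtain ⟨A3, hA3, hEq3⟩ := natRank_exists E (kDual E k ρ) X Y
    have hA : E \ A3 ⊆ E := Finset.sdiff_subset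
    have hkey := key (E \ A3) hA
    rw [Finset.sdiff_sdiff_eq_self hA3] at hkey
    have hle := natRank_le E ρ X (E.biUnion X \ Y) hA
    rw [hfull, hEq3]
    omega
  · obtain ⟨A1, hA1, hEq1⟩ := natRank_exists E ρ X (E.biUnion X \ Y)
    have hkey := key A1 hA1
    have hle := natRank_le E (kDual E k ρ) X Y (A := E \ A1) Finset.sdiff_subset
    rw [hfull, hEq1]
    omega
end

section
/- For a k-polymatroid (E,ρ) with k-dual ρ* and e ∈ E, M_{ρ∖e}^k = (M_{ρ*/e}^k)* and M_{ρ/e}^k = (M_{ρ*∖e}^k)*. -/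
set_option linter.unusedSectionVars false

namespace NatRankAux

variable {α β : Type*} [DecidableEq α] [DecidableEq β]

lemma natRank_le (E : Finset α) (f : Finset α → ℕ) (X : α → Finset β) (Y : Finset β)
    {A : Finset α} (hA : A ⊆ E) :
    natRank E f X Y ≤ f A + (Y \ A.biUnion X).card :=
  Finset.min'_le _ _ (Finset.mem_image_of_mem _ (Finset.mem_powerset.mpr hA))

lemma natRank_exists (E : Finset α) (f : Finset α → ℕ) (X : α → Finset β) (Y : Finset β) :
    ∃ A ⊆ E, natRank E f X Y = f A + (Y \ A.biUnion X).card := by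
  obtain ⟨A, hA, hval⟩ := Finset.mem_image.mp
    (Finset.min'_mem _ ((E.powerset_nonempty).image
      (fun A => f A + (Y \ A.biUnion X).card)))
  exact ⟨A, Finset.mem_powerset.mp hA, hval.symm⟩

lemma biUnion_card (k : ℕ) (E : Finset α) (X : α → Finset β)
    (hcard : ∀ f ∈ E, (X f).card = k)
    (hdisj : ∀ f ∈ E, ∀ g ∈ E, f ≠ g → Disjoint (X f) (X g))
    {S : Finset α} (hS : S ⊆ E) : (S.biUnion X).card = k * S.card := by
  rw [Finset.card_biUnion (fun x hx y hy hxy => hdisj x (hS hx) y (hS hy) hxy),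
    Finset.sum_congr rfl (fun x hx => hcard x (hS hx)), Finset.sum_const, smul_eq_mul,
    mul_comm]

lemma biUnion_sdiff (E : Finset α) (X : α → Finset β)
    (hdisj : ∀ f ∈ E, ∀ g ∈ E, f ≠ g → Disjoint (X f) (X g))
    {A : Finset α} (hA : A ⊆ E) :
    E.biUnion X \ A.biUnion X = (E \ A).biUnion X := by
  ext x
  simp only [Finset.mem_sdiff, Finset.mem_biUnion]
  constructor
  · rintro ⟨⟨f, hf, hxf⟩, hnot⟩
    exact ⟨f, ⟨hf, fun hfA => hnot ⟨f, hfA, hxf⟩⟩, hxf⟩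
  · rintro ⟨f, ⟨hfE, hfA⟩, hxf⟩
    refine ⟨⟨f, hfE, hxf⟩, ?_⟩
    rintro ⟨g, hgA, hxg⟩
    exact Finset.disjoint_left.mp
      (hdisj g (hA hgA) f hfE (fun hgf => hfA (hgf ▸ hgA))) hxg hxf

/-- Main duality lemma for natural matroids. -/
lemma main (k : ℕ) (E : Finset α) (μ d : Finset α → ℕ)
    (hμ0 : μ ∅ = 0)
    (hd : ∀ A ⊆ E, d A + μ E = k * A.card + μ (E \ A))
    (X : α → Finset β) (hcard : ∀ f ∈ E, (X f).card = k)
    (hdisj : ∀ f ∈ E, ∀ g ∈ E, f ≠ g → Disjoint (X f) (X g))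
    (Y : Finset β) (hY : Y ⊆ E.biUnion X) :
    natRank E μ X Y =
      Y.card + natRank E d X (E.biUnion X \ Y) - natRank E d X (E.biUnion X) := by
  set G := E.biUnion X with hG
  -- rank of the full ground set in the dual natural matroid
  have hdualG : natRank E d X G + μ E = k * E.card := by
    have hle : natRank E d X G ≤ d E := by
      have h1 := natRank_le E d X G (le_refl E)
      simpa [hG] using h1
    have hdE := hd E (le_refl E)
    rw [Finset.sdiff_self, hμ0] at hdE
    obtain ⟨A, hA, hval⟩ := natRank_exists E d X G
    have hcardA : ((G \ A.biUnion X)).card = k * (E \ A).card := by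
      rw [biUnion_sdiff E X hdisj hA, biUnion_card k E X hcard hdisj Finset.sdiff_subset]
    have hdA := hd A hA
    have hsum : k * A.card + k * (E \ A).card = k * E.card := by
      have hc : A.card + (E \ A).card = E.card := by
        have := Finset.card_sdiff_add_card_eq_card hA; omega
      rw [← Nat.mul_add, hc]
    omega
  -- the central per-set computation
  have comp : ∀ A ⊆ E,
      Y.card + (d A + ((G \ Y) \ A.biUnion X).card)
        = natRank E d X G + (μ (E \ A) + (Y \ (E \ A).biUnion X).card) := by
    intro A hA
    have hXB : (E \ A).biUnion X = G \ A.biUnion X :=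
      (biUnion_sdiff E X hdisj hA).symm
    have hmem : ∀ x ∈ G, (x ∈ (E \ A).biUnion X ↔ x ∉ A.biUnion X) := by
      intro x hx
      rw [hXB, Finset.mem_sdiff]
      exact ⟨fun h => h.2, fun h => ⟨hx, h⟩⟩
    have e1 : (G \ Y) \ A.biUnion X = (E \ A).biUnion X \ Y := by
      rw [hXB, sdiff_right_comm]
    have e2 : Y \ (E \ A).biUnion X = Y ∩ A.biUnion X := by
      ext x
      simp only [Finset.mem_sdiff, Finset.mem_inter]
      constructor
      · rintro ⟨hxY, hxB⟩
        refine ⟨hxY, ?_⟩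
        by_contra hxA
        exact hxB ((hmem x (hY hxY)).mpr hxA)
      · rintro ⟨hxY, hxA⟩
        exact ⟨hxY, fun hB => ((hmem x (hY hxY)).mp hB) hxA⟩
    have e3 : Y \ A.biUnion X = Y ∩ (E \ A).biUnion X := by
      ext x
      simp only [Finset.mem_sdiff, Finset.mem_inter]
      constructor
      · rintro ⟨hxY, hxA⟩
        exact ⟨hxY, (hmem x (hY hxY)).mpr hxA⟩
      · rintro ⟨hxY, hxB⟩
        exact ⟨hxY, fun hA' => ((hmem x (hY hxY)).mp hxB) hA'⟩
    have c1 : ((G \ Y) \ A.biUnion X).card + (Y \ A.biUnion X).card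
        = k * (E \ A).card := by
      rw [e1, e3, Finset.inter_comm, Finset.card_sdiff_add_card_inter,
        biUnion_card k E X hcard hdisj Finset.sdiff_subset]
    have c2 : (Y \ A.biUnion X).card + (Y \ (E \ A).biUnion X).card = Y.card := by
      rw [e2, Finset.card_sdiff_add_card_inter]
    have hdA := hd A hA
    have hsum : k * A.card + k * (E \ A).card = k * E.card := by
      have hc : A.card + (E \ A).card = E.card := by
        have := Finset.card_sdiff_add_card_eq_card hA; omega
      rw [← Nat.mul_add, hc]
    omega
  -- the key identity
  have key : Y.card + natRank E d X (G \ Y) = natRank E d X G + natRank E μ X Y := by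
    apply le_antisymm
    · obtain ⟨B, hB, hvalB⟩ := natRank_exists E μ X Y
      have hEB : E \ (E \ B) = B := by
        rw [Finset.sdiff_sdiff_self_left, Finset.inter_eq_right.mpr hB]
      calc Y.card + natRank E d X (G \ Y)
          ≤ Y.card + (d (E \ B) + ((G \ Y) \ (E \ B).biUnion X).card) :=
            Nat.add_le_add_left (natRank_le E d X (G \ Y) Finset.sdiff_subset) _
        _ = natRank E d X G + (μ (E \ (E \ B)) + (Y \ (E \ (E \ B)).biUnion X).card) :=
            comp (E \ B) Finset.sdiff_subset
        _ = natRank E d X G + natRank E μ X Y := by rw [hEB, ← hvalB]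
    · obtain ⟨A, hA, hvalA⟩ := natRank_exists E d X (G \ Y)
      calc natRank E d X G + natRank E μ X Y
          ≤ natRank E d X G + (μ (E \ A) + (Y \ (E \ A).biUnion X).card) :=
            Nat.add_le_add_left (natRank_le E μ X Y Finset.sdiff_subset) _
        _ = Y.card + (d A + ((G \ Y) \ A.biUnion X).card) := (comp A hA).symm
        _ = Y.card + natRank E d X (G \ Y) := by rw [← hvalA]
  omega

/-- Subadditivity: `ρ(A ∪ B) ≤ ρ A + k|B|`. -/
lemma subadd {E : Finset α} {ρ : Finset α → ℕ} {k : ℕ}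
    (h : IsPolymatroid E ρ) (hk : ∀ f ∈ E, ρ {f} ≤ k) :
    ∀ B ⊆ E, ∀ A ⊆ E, ρ (A ∪ B) ≤ ρ A + k * B.card := by
  intro B
  induction B using Finset.induction_on with
  | empty => intro _ A hA; simp
  | @insert b B hb ih =>
    intro hins A hA
    have hbE : b ∈ E := hins (Finset.mem_insert_self b B)
    have hBE : B ⊆ E := (Finset.subset_insert b B).trans hins
    have h1 := h.submodular (A ∪ B) {b} (Finset.union_subset hA hBE)
      (Finset.singleton_subset_iff.mpr hbE)
    have h2 := ih hBE A hA
    have h3 := hk b hbE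
    have hu : A ∪ insert b B = (A ∪ B) ∪ {b} := by
      ext x; simp [Finset.mem_insert, Finset.mem_union]
    have hm : k * (insert b B).card = k * B.card + k := by
      rw [Finset.card_insert_of_notMem hb]; ring
    rw [hu, hm]
    omega

end NatRankAux

open NatRankAux in
/-- `M_{ρ∖e}^k = (M_{ρ*/e}^k)*` and `M_{ρ/e}^k = (M_{ρ*∖e}^k)*`, where all matroids live
on the ground set `X_{E - e}` and the matroid dual of `(G, r)` has rank
`Y ↦ |Y| + r(G \ Y) - r(G)`. -/
theorem natRank_del_contr_dual {α β : Type*} [DecidableEq α] [DecidableEq β] (k : ℕ)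
    (E : Finset α) (ρ : Finset α → ℕ) (h : IsPolymatroid E ρ)
    (hk : ∀ e ∈ E, ρ {e} ≤ k) (e : α) (he : e ∈ E)
    (X : α → Finset β) (hcard : ∀ e ∈ E, (X e).card = k)
    (hdisjX : ∀ e ∈ E, ∀ f ∈ E, e ≠ f → Disjoint (X e) (X f)) :
    (∀ Y ⊆ (E.erase e).biUnion X,
      natRank (E.erase e) ρ X Y =
        Y.card +
          natRank (E.erase e) (fun A => kDual E k ρ (insert e A) - kDual E k ρ {e}) X
            ((E.erase e).biUnion X \ Y) -
          natRank (E.erase e) (fun A => kDual E k ρ (insert e A) - kDual E k ρ {e}) X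
            ((E.erase e).biUnion X)) ∧
    (∀ Y ⊆ (E.erase e).biUnion X,
      natRank (E.erase e) (fun A => ρ (insert e A) - ρ {e}) X Y =
        Y.card + natRank (E.erase e) (kDual E k ρ) X ((E.erase e).biUnion X \ Y) -
          natRank (E.erase e) (kDual E k ρ) X ((E.erase e).biUnion X)) := by
  have hE'sub : E.erase e ⊆ E := Finset.erase_subset e E
  have hcard' : ∀ f ∈ E.erase e, (X f).card = k := fun f hf => hcard f (hE'sub hf)
  have hdisj' : ∀ f ∈ E.erase e, ∀ g ∈ E.erase e, f ≠ g → Disjoint (X f) (X g) :=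
    fun f hf g hg hfg => hdisjX f (hE'sub hf) g (hE'sub hg) hfg
  constructor
  · -- deletion / dual contraction
    intro Y hY
    refine main k (E.erase e) ρ _ h.normalized ?_ X hcard' hdisj' Y hY
    intro A hA
    have heA : e ∉ A := fun hmem => (Finset.mem_erase.mp (hA hmem)).1 rfl
    have hAE : A ⊆ E := hA.trans hE'sub
    have hinsE : insert e A ⊆ E := Finset.insert_subset he hAE
    have s1 : E \ insert e A = E.erase e \ A := by
      ext x
      simp only [Finset.mem_sdiff, Finset.mem_insert, Finset.mem_erase]
      tauto
    have s2 : E \ {e} = E.erase e := (Finset.erase_eq E e).symm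
    have exact1 : ρ E ≤ ρ (E.erase e \ A) + k * (A.card + 1) := by
      have := subadd h hk (insert e A) hinsE (E \ insert e A) Finset.sdiff_subset
      rw [Finset.sdiff_union_of_subset hinsE, s1,
        Finset.card_insert_of_notMem heA] at this
      exact this
    have exact2 : ρ E ≤ ρ (E.erase e) + k * 1 := by
      have := subadd h hk {e} (Finset.singleton_subset_iff.mpr he) (E \ {e})
        Finset.sdiff_subset
      rw [Finset.sdiff_union_of_subset (Finset.singleton_subset_iff.mpr he), s2,
        Finset.card_singleton] at this
      exact this
    have exact3 : ρ (E.erase e) ≤ ρ (E.erase e \ A) + k * A.card := by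
      have hsubE' : A ⊆ E := hAE
      have := subadd h hk A hAE (E.erase e \ A) (Finset.sdiff_subset.trans hE'sub)
      rw [Finset.sdiff_union_of_subset hA] at this
      exact this
    simp only [kDual, s1, s2, Finset.card_insert_of_notMem heA, Finset.card_singleton]
    have hm1 : k * (A.card + 1) = k * A.card + k := by ring
    omega
  · -- contraction / dual deletion
    intro Y hY
    refine main k (E.erase e) (fun A => ρ (insert e A) - ρ {e}) _ ?_ ?_ X hcard' hdisj' Y hY
    · simp
    intro A hA
    have heA : e ∉ A := fun hmem => (Finset.mem_erase.mp (hA hmem)).1 rfl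
    have hAE : A ⊆ E := hA.trans hE'sub
    have s3 : insert e (E.erase e) = E := Finset.insert_erase he
    have s4 : insert e (E.erase e \ A) = E \ A := by
      ext x
      simp only [Finset.mem_insert, Finset.mem_sdiff, Finset.mem_erase]
      constructor
      · rintro (rfl | ⟨⟨hne, hxE⟩, hxA⟩)
        · exact ⟨he, heA⟩
        · exact ⟨hxE, hxA⟩
      · rintro ⟨hxE, hxA⟩
        by_cases hx : x = e
        · exact Or.inl hx
        · exact Or.inr ⟨⟨hx, hxE⟩, hxA⟩
    have mono1 : ρ {e} ≤ ρ (E \ A) :=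
      h.monotone {e} (E \ A)
        (Finset.singleton_subset_iff.mpr (Finset.mem_sdiff.mpr ⟨he, heA⟩))
        Finset.sdiff_subset
    have mono2 : ρ {e} ≤ ρ E :=
      h.monotone {e} E (Finset.singleton_subset_iff.mpr he) (le_refl E)
    have exact4 : ρ E ≤ ρ (E \ A) + k * A.card := by
      have := subadd h hk A hAE (E \ A) Finset.sdiff_subset
      rw [Finset.sdiff_union_of_subset hAE] at this
      exact this
    simp only [kDual, s3, s4]
    omega
end
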